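/- If a non-crossing spanning path of a set of points in convex position is not a boundary path (i.e., it contains at least one diagonal), then its two endpoints are not adjacent vertices on the convex hull boundary. -/

import Mathlib

namespace PG

/-- The `k`-th vertex (mod `n`) of the convex polygon. -/
def pt (n : ℕ) (hn : 0 < n) (k : ℕ) : Fin n := ⟨k % n, Nat.mod_lt _ hn⟩

/-- `e` is a boundary (convex hull) edge of the convex `n`-gon. -/
def IsHullEdge {n : ℕ} (e : Sym2 (Fin n)) : Prop :=
  ∃ a b : Fin n, e = s(a, b) ∧ ((a.val + 1) % n = b.val ∨ (b.val + 1) % n = a.val)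

instance {n : ℕ} : DecidablePred (IsHullEdge (n := n)) := fun _ => by
  unfold IsHullEdge; infer_instance

/-- Two chords of the convex `n`-gon cross (intersect in interior points):
their endpoint pairs are all distinct and separate each other in the cyclic order. -/
def Crosses {n : ℕ} (e f : Sym2 (Fin n)) : Prop :=
  ∃ a b c d : Fin n, e = s(a, b) ∧ f = s(c, d) ∧
    a ≠ b ∧ c ≠ d ∧ a ≠ c ∧ a ≠ d ∧ b ≠ c ∧ b ≠ d ∧
    (((c.val + n - a.val) % n < (b.val + n - a.val) % n) ↔
      ¬((d.val + n - a.val) % n < (b.val + n - a.val) % n))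

instance {n : ℕ} (e f : Sym2 (Fin n)) : Decidable (Crosses e f) := by
  unfold Crosses; infer_instance

/-- The edge set of the spanning path visiting the points in the order given
by the permutation `p`. -/
def pathEdges {n : ℕ} (p : Equiv.Perm (Fin n)) : Finset (Sym2 (Fin n)) :=
  Finset.univ.filter (fun e => ∃ i j : Fin n, e = s(p i, p j) ∧ j.val = i.val + 1)

/-- `E` is the edge set of a non-crossing (plane) spanning path. -/
def IsNCPath {n : ℕ} (E : Finset (Sym2 (Fin n))) : Prop :=
  (∃ p : Equiv.Perm (Fin n), E = pathEdges p) ∧ ∀ e ∈ E, ∀ f ∈ E, ¬ Crosses e f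

instance {n : ℕ} : DecidablePred (IsNCPath (n := n)) := fun _ => by
  unfold IsNCPath pathEdges; infer_instance

/-- Vertices of the path graph `G(P)`: non-crossing spanning paths. -/
def PVert (n : ℕ) := {E : Finset (Sym2 (Fin n)) // IsNCPath E}

instance {n : ℕ} : Fintype (PVert n) := Subtype.fintype _
instance {n : ℕ} : DecidableEq (PVert n) := Subtype.instDecidableEq

/-- The path graph `G(P)`: two plane spanning paths are adjacent iff their
edge sets differ in exactly two edges. -/
def pathGraph (n : ℕ) : SimpleGraph (PVert n) where
  Adj u v := u ≠ v ∧ (u.1 \ v.1 ∪ v.1 \ u.1).card = 2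
  symm := by constructor; rintro u v ⟨h1, h2⟩; exact ⟨h1.symm, by rwa [Finset.union_comm]⟩
  loopless := by constructor; rintro u ⟨h, _⟩; exact h rfl

instance {n : ℕ} : DecidableRel (pathGraph n).Adj := fun u v => by
  unfold pathGraph; infer_instance

/-- `v` is a boundary path: all its edges are hull edges. -/
def IsBoundary {n : ℕ} (v : PVert n) : Prop := ∀ e ∈ v.1, IsHullEdge e

/-- Number of diagonals (the level) of a path. -/
def diagCount {n : ℕ} (v : PVert n) : ℕ :=
  (v.1.filter (fun e => ¬ IsHullEdge e)).card

/-- Degree of a point in an edge set. -/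
def degIn {n : ℕ} (E : Finset (Sym2 (Fin n))) (x : Fin n) : ℕ :=
  (E.filter (fun e => x ∈ e)).card




private lemma mod2 (n x : ℕ) (h : x < 2 * n) : x % n = if x < n then x else x - n := by
  split_ifs with h1
  · exact Nat.mod_eq_of_lt h1
  · rw [Nat.mod_eq_sub_mod (Nat.le_of_not_lt h1)]
    exact Nat.mod_eq_of_lt (by omega)

private lemma cy_eq (n A B : ℕ) (hA : A < n) (hB : B < n) :
    (B + n - A) % n = if A ≤ B then B - A else B + n - A := by
  rw [mod2 n (B + n - A) (by omega)]
  split_ifs <;> omega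

private lemma cy_congr (n A B A' B' : ℕ) (hA : A < n) (hB : B < n) (hA' : A' < n) (hB' : B' < n)
    (h : A + B' = B + A' ∨ A + B' + n = B + A' ∨ A + B' = B + A' + n) :
    (B + n - A) % n = (B' + n - A') % n := by
  rw [cy_eq n A B hA hB, cy_eq n A' B' hA' hB']
  split_ifs <;> omega

private def sepN (n A B C D : ℕ) : Prop :=
  ((C + n - A) % n < (B + n - A) % n) ↔ ¬((D + n - A) % n < (B + n - A) % n)

private def sepR (n A B C D : ℕ) : Prop :=
  ((A + n - C) % n < (A + n - B) % n) ↔ ¬((A + n - D) % n < (A + n - B) % n)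

private lemma sepN_comm_cd {n A B C D : ℕ} (h : sepN n A B C D) : sepN n A B D C := by
  unfold sepN at *; tauto

private lemma sepN_comm_ab {n A B C D : ℕ} (hA : A < n) (hB : B < n) (hC : C < n) (hD : D < n)
    (hAB : A ≠ B) (hAC : A ≠ C) (hAD : A ≠ D) (hBC : B ≠ C) (hBD : B ≠ D) (hCD : C ≠ D)
    (h : sepN n A B C D) : sepN n B A C D := by
  unfold sepN at *
  rw [cy_eq n A C hA hC, cy_eq n A B hA hB, cy_eq n A D hA hD] at h
  rw [cy_eq n B C hB hC, cy_eq n B A hB hA, cy_eq n B D hB hD]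
  split_ifs at h ⊢ <;> omega

private lemma sepR_to_sepN {n A B C D : ℕ} (hA : A < n) (hB : B < n) (hC : C < n) (hD : D < n)
    (hAB : A ≠ B) (hAC : A ≠ C) (hAD : A ≠ D) (hBC : B ≠ C) (hBD : B ≠ D) (hCD : C ≠ D)
    (h : sepR n A B C D) : sepN n A B C D := by
  unfold sepR sepN at *
  rw [cy_eq n C A hC hA, cy_eq n B A hB hA, cy_eq n D A hD hA] at h
  rw [cy_eq n A C hA hC, cy_eq n A B hA hB, cy_eq n A D hA hD]
  split_ifs at h ⊢ <;> omega

private lemma crosses_mk {n : ℕ} (a b c d : Fin n)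
    (h1 : a.val < c.val) (h2 : c.val < b.val) (h3 : b.val < d.val) :
    Crosses s(a, b) s(c, d) := by
  have hd := d.isLt
  refine ⟨a, b, c, d, rfl, rfl, Fin.ne_of_val_ne (by omega), Fin.ne_of_val_ne (by omega),
    Fin.ne_of_val_ne (by omega), Fin.ne_of_val_ne (by omega), Fin.ne_of_val_ne (by omega),
    Fin.ne_of_val_ne (by omega), ?_⟩
  rw [cy_eq n a.val c.val a.isLt c.isLt, cy_eq n a.val b.val a.isLt b.isLt,
      cy_eq n a.val d.val a.isLt d.isLt]
  split_ifs <;> omega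

private lemma transfer_core {n : ℕ} (a b c d : Fin n)
    (hab : a.val ≠ b.val) (hcd : c.val ≠ d.val) (hac : a.val ≠ c.val) (had : a.val ≠ d.val)
    (hbc : b.val ≠ c.val) (hbd : b.val ≠ d.val)
    (h : sepN n a.val b.val c.val d.val ∨ sepN n b.val a.val c.val d.val ∨
         sepN n a.val b.val d.val c.val ∨ sepN n b.val a.val d.val c.val ∨
         sepR n a.val b.val c.val d.val ∨ sepR n b.val a.val c.val d.val ∨
         sepR n a.val b.val d.val c.val ∨ sepR n b.val a.val d.val c.val) :
    Crosses s(a, b) s(c, d) := by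
  have hA := a.isLt; have hB := b.isLt; have hC := c.isLt; have hD := d.isLt
  refine ⟨a, b, c, d, rfl, rfl, Fin.ne_of_val_ne hab, Fin.ne_of_val_ne hcd,
    Fin.ne_of_val_ne hac, Fin.ne_of_val_ne had, Fin.ne_of_val_ne hbc, Fin.ne_of_val_ne hbd, ?_⟩
  show sepN n a.val b.val c.val d.val
  rcases h with h | h | h | h | h | h | h | h
  · exact h
  · exact sepN_comm_ab hB hA hC hD (Ne.symm hab) hbc hbd hac had hcd h
  · exact sepN_comm_cd h
  · exact sepN_comm_cd (sepN_comm_ab hB hA hD hC (Ne.symm hab) hbd hbc had hac (Ne.symm hcd) h)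
  · exact sepR_to_sepN hA hB hC hD hab hac had hbc hbd hcd h
  · exact sepN_comm_ab hB hA hC hD (Ne.symm hab) hbc hbd hac had hcd
      (sepR_to_sepN hB hA hC hD (Ne.symm hab) hbc hbd hac had hcd h)
  · exact sepN_comm_cd (sepR_to_sepN hA hB hD hC hab had hac hbd hbc (Ne.symm hcd) h)
  · exact sepN_comm_cd (sepN_comm_ab hB hA hD hC (Ne.symm hab) hbd hbc had hac (Ne.symm hcd)
      (sepR_to_sepN hB hA hD hC (Ne.symm hab) hbd hbc had hac (Ne.symm hcd) h))

private lemma crosses_transfer {n : ℕ} (σ : Fin n → Fin n) (hinj : Function.Injective σ)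
    (hσ : (∀ x y : Fin n, ((σ y).val + n - (σ x).val) % n = (y.val + n - x.val) % n)
        ∨ (∀ x y : Fin n, ((σ y).val + n - (σ x).val) % n = (x.val + n - y.val) % n))
    (a b c d : Fin n) (h : Crosses s(σ a, σ b) s(σ c, σ d)) : Crosses s(a, b) s(c, d) := by
  obtain ⟨a', b', c', d', he, hf, h1, h2, h3, h4, h5, h6, hsep⟩ := h
  rw [Sym2.eq_iff] at he hf
  have vne : ∀ x y : Fin n, σ x ≠ σ y → x.val ≠ y.val := fun x y hxy h =>
    hxy (congrArg σ (Fin.ext h))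
  rcases he with ⟨ha, hb⟩ | ⟨ha, hb⟩ <;> rcases hf with ⟨hc, hd⟩ | ⟨hc, hd⟩ <;>
      subst ha <;> subst hb <;> subst hc <;> subst hd
  · rcases hσ with hr | hr
    · rw [hr a c, hr a b, hr a d] at hsep
      exact transfer_core a b c d (vne _ _ h1) (vne _ _ h2) (vne _ _ h3) (vne _ _ h4)
        (vne _ _ h5) (vne _ _ h6) (Or.inl hsep)
    · rw [hr a c, hr a b, hr a d] at hsep
      exact transfer_core a b c d (vne _ _ h1) (vne _ _ h2) (vne _ _ h3) (vne _ _ h4)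
        (vne _ _ h5) (vne _ _ h6) (Or.inr (Or.inr (Or.inr (Or.inr (Or.inl hsep)))))
  · rcases hσ with hr | hr
    · rw [hr a d, hr a b, hr a c] at hsep
      exact transfer_core a b c d (vne _ _ h1) ((vne _ _ h2).symm) (vne _ _ h4) (vne _ _ h3)
        (vne _ _ h6) (vne _ _ h5) (Or.inr (Or.inr (Or.inl hsep)))
    · rw [hr a d, hr a b, hr a c] at hsep
      exact transfer_core a b c d (vne _ _ h1) ((vne _ _ h2).symm) (vne _ _ h4) (vne _ _ h3)
        (vne _ _ h6) (vne _ _ h5) (Or.inr (Or.inr (Or.inr (Or.inr (Or.inr (Or.inr (Or.inl hsep)))))))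
  · rcases hσ with hr | hr
    · rw [hr b c, hr b a, hr b d] at hsep
      exact transfer_core a b c d ((vne _ _ h1).symm) (vne _ _ h2) (vne _ _ h5) (vne _ _ h6)
        (vne _ _ h3) (vne _ _ h4) (Or.inr (Or.inl hsep))
    · rw [hr b c, hr b a, hr b d] at hsep
      exact transfer_core a b c d ((vne _ _ h1).symm) (vne _ _ h2) (vne _ _ h5) (vne _ _ h6)
        (vne _ _ h3) (vne _ _ h4) (Or.inr (Or.inr (Or.inr (Or.inr (Or.inr (Or.inl hsep))))))
  · rcases hσ with hr | hr
    · rw [hr b d, hr b a, hr b c] at hsep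
      exact transfer_core a b c d ((vne _ _ h1).symm) ((vne _ _ h2).symm) (vne _ _ h6) (vne _ _ h5)
        (vne _ _ h4) (vne _ _ h3) (Or.inr (Or.inr (Or.inr (Or.inl hsep))))
    · rw [hr b d, hr b a, hr b c] at hsep
      exact transfer_core a b c d ((vne _ _ h1).symm) ((vne _ _ h2).symm) (vne _ _ h6) (vne _ _ h5)
        (vne _ _ h4) (vne _ _ h3)
        (Or.inr (Or.inr (Or.inr (Or.inr (Or.inr (Or.inr (Or.inr hsep)))))))

private lemma core (n : ℕ) (hn : 3 ≤ n) (pf0 : 0 < n) (pfL : n - 1 < n)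
    (q : Fin n → Fin n) (hinj : Function.Injective q)
    (h0 : (q ⟨0, pf0⟩).val = 0) (hL : (q ⟨n - 1, pfL⟩).val = n - 1)
    (hnc : ∀ i j : ℕ, ∀ (hi : i + 1 < n) (hj : j + 1 < n),
      ¬ Crosses s(q ⟨i, Nat.lt_of_succ_lt hi⟩, q ⟨i + 1, hi⟩)
                s(q ⟨j, Nat.lt_of_succ_lt hj⟩, q ⟨j + 1, hj⟩)) :
    ∀ k, ∀ hk : k < n, (q ⟨k, hk⟩).val = k := by
  classical
  intro k
  induction k using Nat.strong_induction_on with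
  | _ k IH =>
  intro hk
  by_cases hk0 : k = 0
  · subst hk0; exact h0
  by_cases hkL : k = n - 1
  · subst hkL; exact hL
  by_contra hne
  set m := (q ⟨k, hk⟩).val with hm
  have hmlt : m < n := by rw [hm]; exact (q ⟨k, hk⟩).isLt
  have hmk : k < m := by
    rcases Nat.lt_trichotomy m k with h | h | h
    · exfalso
      have e1 : (q ⟨m, by omega⟩).val = m := IH m h (by omega)
      have e2 : (⟨m, by omega⟩ : Fin n) = ⟨k, hk⟩ := hinj (Fin.ext (e1.trans hm))
      have e3 : m = k := congrArg Fin.val e2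
      exact hne e3
    · exact absurd h hne
    · exact h
  have hmL : m < n - 1 := by
    rcases Nat.lt_trichotomy m (n - 1) with h | h | h
    · exact h
    · exfalso
      have e2 : q ⟨k, hk⟩ = q ⟨n - 1, pfL⟩ := Fin.ext (by rw [← hm, h, hL])
      have e3 : k = n - 1 := congrArg Fin.val (hinj e2)
      exact hkL e3
    · omega
  obtain ⟨tf, htf⟩ := Finite.surjective_of_injective hinj ⟨k, hk⟩
  obtain ⟨t, htlt⟩ := tf
  have htv : (q ⟨t, htlt⟩).val = k := by rw [htf]
  have htk : k < t := by
    rcases Nat.lt_trichotomy t k with h | h | h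
    · have := IH t h htlt
      omega
    · exfalso
      subst h
      exact hne (hm.trans htv)
    · exact h
  have htL : t < n - 1 := by
    rcases Nat.lt_trichotomy t (n - 1) with h | h | h
    · exact h
    · exfalso
      subst h
      exact hkL (htv.symm.trans hL)
    · omega
  have hex : ∃ u, t ≤ u ∧ ∃ h : u + 1 < n,
      ¬(k ≤ (q ⟨u + 1, h⟩).val ∧ (q ⟨u + 1, h⟩).val < m) := by
    have hn2 : n - 2 + 1 < n := by omega
    have e : (q ⟨n - 2 + 1, hn2⟩).val = n - 1 := by
      have he : (⟨n - 2 + 1, hn2⟩ : Fin n) = ⟨n - 1, pfL⟩ := Fin.ext (show n - 2 + 1 = n - 1 by omega)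
      rw [he]; exact hL
    exact ⟨n - 2, by omega, hn2, by rw [e]; omega⟩
  have hspec := Nat.find_spec hex
  have hminall := fun m (h : m < Nat.find hex) => Nat.find_min hex h
  generalize hgen : Nat.find hex = u at hspec hminall
  obtain ⟨htu, hu1, hnot⟩ := hspec
  have hin : k ≤ (q ⟨u, Nat.lt_of_succ_lt hu1⟩).val ∧ (q ⟨u, Nat.lt_of_succ_lt hu1⟩).val < m := by
    rcases Nat.eq_or_lt_of_le htu with he | hlt
    · have he2 : (⟨u, Nat.lt_of_succ_lt hu1⟩ : Fin n) = ⟨t, htlt⟩ :=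
        Fin.ext (show u = t from he.symm)
      have hv : (q ⟨u, Nat.lt_of_succ_lt hu1⟩).val = k := by rw [he2]; exact htv
      omega
    · have hmin := hminall (u - 1) (show u - 1 < u by omega)
      push_neg at hmin
      have h1 : u - 1 + 1 < n := by omega
      have h2 := hmin (by omega) h1
      have he2 : (⟨u - 1 + 1, h1⟩ : Fin n) = ⟨u, Nat.lt_of_succ_lt hu1⟩ :=
        Fin.ext (show u - 1 + 1 = u by omega)
      rw [he2] at h2
      exact h2
  have hd1 : m < (q ⟨u + 1, hu1⟩).val := by
    have hdlt := (q ⟨u + 1, hu1⟩).isLt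
    have hdk : k ≤ (q ⟨u + 1, hu1⟩).val := by
      by_contra hc
      push_neg at hc
      have e1 : (q ⟨(q ⟨u + 1, hu1⟩).val, by omega⟩).val = (q ⟨u + 1, hu1⟩).val :=
        IH _ hc (by omega)
      have e2 : (⟨(q ⟨u + 1, hu1⟩).val, by omega⟩ : Fin n) = ⟨u + 1, hu1⟩ := hinj (Fin.ext e1)
      have e3 : (q ⟨u + 1, hu1⟩).val = u + 1 := congrArg Fin.val e2
      omega
    have hdm : (q ⟨u + 1, hu1⟩).val ≠ m := by
      intro hc
      have e2 : (⟨u + 1, hu1⟩ : Fin n) = ⟨k, hk⟩ := hinj (Fin.ext (hc.trans hm))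
      have e3 : u + 1 = k := congrArg Fin.val e2
      omega
    omega
  have hk1 : k - 1 + 1 < n := by omega
  have hkm : (⟨k - 1 + 1, hk1⟩ : Fin n) = ⟨k, hk⟩ := Fin.ext (show k - 1 + 1 = k by omega)
  have hq1 : (q ⟨k - 1, Nat.lt_of_succ_lt hk1⟩).val = k - 1 := IH (k - 1) (by omega) _
  apply hnc (k - 1) u hk1 hu1
  rw [hkm]
  exact crosses_mk _ _ _ _ (by rw [hq1]; omega) (by rw [← hm]; omega) (by rw [← hm]; omega)

private def rotF (n r : ℕ) (hn0 : 0 < n) (x : Fin n) : Fin n :=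
  ⟨(x.val + r) % n, Nat.mod_lt _ hn0⟩

private def refF (n s : ℕ) (hn0 : 0 < n) (x : Fin n) : Fin n :=
  ⟨(s + n - x.val) % n, Nat.mod_lt _ hn0⟩

private lemma rot_inj (n r : ℕ) (hn0 : 0 < n) (hr : r ≤ n) :
    Function.Injective (rotF n r hn0) := by
  intro x y h
  have hx' := x.isLt; have hy' := y.isLt
  have hx := mod2 n (x.val + r) (by omega)
  have hy := mod2 n (y.val + r) (by omega)
  have h' : (x.val + r) % n = (y.val + r) % n := congrArg Fin.val h
  apply Fin.ext
  rw [hx, hy] at h'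
  split_ifs at h' <;> omega

private lemma ref_inj (n s : ℕ) (hn0 : 0 < n) (hs : s < n) :
    Function.Injective (refF n s hn0) := by
  intro x y h
  have hx' := x.isLt; have hy' := y.isLt
  have hx := mod2 n (s + n - x.val) (by omega)
  have hy := mod2 n (s + n - y.val) (by omega)
  have h' : (s + n - x.val) % n = (s + n - y.val) % n := congrArg Fin.val h
  apply Fin.ext
  rw [hx, hy] at h'
  split_ifs at h' <;> omega

private lemma cy_rot (n r : ℕ) (hn0 : 0 < n) (hr : r ≤ n) (x y : Fin n) :
    ((rotF n r hn0 y).val + n - (rotF n r hn0 x).val) % n = (y.val + n - x.val) % n := by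
  have hx' := x.isLt; have hy' := y.isLt
  have hx := mod2 n (x.val + r) (by omega)
  have hy := mod2 n (y.val + r) (by omega)
  show ((y.val + r) % n + n - (x.val + r) % n) % n = (y.val + n - x.val) % n
  refine cy_congr n ((x.val + r) % n) ((y.val + r) % n) x.val y.val
    (Nat.mod_lt _ hn0) (Nat.mod_lt _ hn0) hx' hy' ?_
  rw [hx, hy]
  split_ifs <;> omega

private lemma cy_ref (n s : ℕ) (hn0 : 0 < n) (hs : s < n) (x y : Fin n) :
    ((refF n s hn0 y).val + n - (refF n s hn0 x).val) % n = (x.val + n - y.val) % n := by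
  have hx' := x.isLt; have hy' := y.isLt
  have hx := mod2 n (s + n - x.val) (by omega)
  have hy := mod2 n (s + n - y.val) (by omega)
  show ((s + n - y.val) % n + n - (s + n - x.val) % n) % n = (x.val + n - y.val) % n
  refine cy_congr n ((s + n - x.val) % n) ((s + n - y.val) % n) y.val x.val
    (Nat.mod_lt _ hn0) (Nat.mod_lt _ hn0) hy' hx' ?_
  rw [hx, hy]
  split_ifs <;> omega



private lemma main_aux (n : ℕ) (hn : 3 ≤ n) (pf0 : 0 < n) (pfL : n - 1 < n)
    (p : Equiv.Perm (Fin n))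
    (hnc : ∀ e ∈ pathEdges p, ∀ f ∈ pathEdges p, ¬ Crosses e f)
    (hdiag : ∃ e ∈ pathEdges p, ¬ IsHullEdge e)
    (σ : Fin n → Fin n) (hinj : Function.Injective σ)
    (hσ : (∀ x y : Fin n, ((σ y).val + n - (σ x).val) % n = (y.val + n - x.val) % n)
        ∨ (∀ x y : Fin n, ((σ y).val + n - (σ x).val) % n = (x.val + n - y.val) % n))
    (h0 : (σ (p ⟨0, pf0⟩)).val = 0) (hL : (σ (p ⟨n - 1, pfL⟩)).val = n - 1)
    (hull : ∀ a b : Fin n, (σ b).val = (σ a).val + 1 → IsHullEdge s(a, b)) : False := by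
  have hmem : ∀ (i : ℕ) (hi : i + 1 < n),
      s(p ⟨i, Nat.lt_of_succ_lt hi⟩, p ⟨i + 1, hi⟩) ∈ pathEdges p := by
    intro i hi
    simp only [pathEdges, Finset.mem_filter, Finset.mem_univ, true_and]
    exact ⟨⟨i, Nat.lt_of_succ_lt hi⟩, ⟨i + 1, hi⟩, rfl, rfl⟩
  have hncq : ∀ i j : ℕ, ∀ (hi : i + 1 < n) (hj : j + 1 < n),
      ¬ Crosses s((fun z => σ (p z)) ⟨i, Nat.lt_of_succ_lt hi⟩, (fun z => σ (p z)) ⟨i + 1, hi⟩)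
                s((fun z => σ (p z)) ⟨j, Nat.lt_of_succ_lt hj⟩, (fun z => σ (p z)) ⟨j + 1, hj⟩) := by
    intro i j hi hj hc
    exact hnc _ (hmem i hi) _ (hmem j hj) (crosses_transfer σ hinj hσ _ _ _ _ hc)
  have hid := core n hn pf0 pfL (fun z => σ (p z)) (hinj.comp p.injective) h0 hL hncq
  obtain ⟨e, he, hne⟩ := hdiag
  simp only [pathEdges, Finset.mem_filter, Finset.mem_univ, true_and] at he
  obtain ⟨i, j, rfl, hij⟩ := he
  apply hne
  apply hull
  have hi' : (σ (p i)).val = i.val := hid i.val i.isLt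
  have hj' : (σ (p j)).val = j.val := hid j.val j.isLt
  omega


/-- If a non-crossing spanning path is not a boundary path, then its two
endpoints are not neighboring vertices of the convex hull. -/
theorem endpoints_not_neighboring_of_not_boundary (n : ℕ) (hn : 3 ≤ n)
    (p : Equiv.Perm (Fin n))
    (hnc : ∀ e ∈ pathEdges p, ∀ f ∈ pathEdges p, ¬ Crosses e f)
    (hdiag : ∃ e ∈ pathEdges p, ¬ IsHullEdge e) :
    ¬ IsHullEdge (s(p ⟨0, by omega⟩, p ⟨n - 1, by omega⟩)) := by
  intro hHE
  have hn0 : 0 < n := by omega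
  have pf0 : 0 < n := by omega
  have pfL : n - 1 < n := by omega
  have hHE' : IsHullEdge s(p ⟨0, pf0⟩, p ⟨n - 1, pfL⟩) := hHE
  obtain ⟨a, b, heq, hor⟩ := hHE'
  rw [Sym2.eq_iff] at heq
  have ha0 := (p ⟨0, pf0⟩).isLt
  have haL := (p ⟨n - 1, pfL⟩).isLt
  have hd : ((p ⟨0, pf0⟩).val + 1) % n = (p ⟨n - 1, pfL⟩).val ∨
      ((p ⟨n - 1, pfL⟩).val + 1) % n = (p ⟨0, pf0⟩).val := by
    rcases heq with ⟨h1, h2⟩ | ⟨h1, h2⟩ <;> rw [← h1, ← h2] at hor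
    · exact hor
    · exact hor.symm
  rcases hd with hcase | hcase
  · -- reflection case
    refine main_aux n hn pf0 pfL p hnc hdiag (refF n (p ⟨0, pf0⟩).val hn0)
      (ref_inj n _ hn0 ha0) (Or.inr (cy_ref n _ hn0 ha0)) ?_ ?_ ?_
    · show ((p ⟨0, pf0⟩).val + n - (p ⟨0, pf0⟩).val) % n = 0
      rw [show (p ⟨0, pf0⟩).val + n - (p ⟨0, pf0⟩).val = n by omega, Nat.mod_self]
    · show ((p ⟨0, pf0⟩).val + n - (p ⟨n - 1, pfL⟩).val) % n = n - 1
      have h1 := mod2 n ((p ⟨0, pf0⟩).val + 1) (by omega)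
      rw [h1] at hcase
      rw [mod2 n _ (by omega)]
      split_ifs at hcase ⊢ <;> omega
    · intro a b h
      refine ⟨a, b, rfl, Or.inr ?_⟩
      have hav := a.isLt; have hbv := b.isLt
      have h' : ((p ⟨0, pf0⟩).val + n - b.val) % n = ((p ⟨0, pf0⟩).val + n - a.val) % n + 1 := h
      rw [mod2 n ((p ⟨0, pf0⟩).val + n - b.val) (by omega),
          mod2 n ((p ⟨0, pf0⟩).val + n - a.val) (by omega)] at h'
      rw [mod2 n (b.val + 1) (by omega)]
      split_ifs at h' ⊢ <;> omega
  · -- rotation case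
    refine main_aux n hn pf0 pfL p hnc hdiag (rotF n (n - (p ⟨0, pf0⟩).val) hn0)
      (rot_inj n _ hn0 (by omega)) (Or.inl (cy_rot n _ hn0 (by omega))) ?_ ?_ ?_
    · show ((p ⟨0, pf0⟩).val + (n - (p ⟨0, pf0⟩).val)) % n = 0
      rw [show (p ⟨0, pf0⟩).val + (n - (p ⟨0, pf0⟩).val) = n by omega, Nat.mod_self]
    · show ((p ⟨n - 1, pfL⟩).val + (n - (p ⟨0, pf0⟩).val)) % n = n - 1
      have h1 := mod2 n ((p ⟨n - 1, pfL⟩).val + 1) (by omega)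
      rw [h1] at hcase
      rw [mod2 n _ (by omega)]
      split_ifs at hcase ⊢ <;> omega
    · intro a b h
      refine ⟨a, b, rfl, Or.inl ?_⟩
      have hav := a.isLt; have hbv := b.isLt
      have h' : (b.val + (n - (p ⟨0, pf0⟩).val)) % n =
          (a.val + (n - (p ⟨0, pf0⟩).val)) % n + 1 := h
      rw [mod2 n (b.val + (n - (p ⟨0, pf0⟩).val)) (by omega),
          mod2 n (a.val + (n - (p ⟨0, pf0⟩).val)) (by omega)] at h'
      rw [mod2 n (a.val + 1) (by omega)]
      split_ifs at h' ⊢ <;> omega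

end PG
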